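/- For a finite simple graph G, the number of maximal independent sets of G equals 3^ν(G) if and only if G is isomorphic to the disjoint union of s copies of the triangle K₃ and t isolated vertices, where s = ν(G) and t = |V(G)| − 3s; equivalently, if and only if every connected component of G is either a triangle (a complete graph on 3 vertices) or a single isolated vertex. -/

import Mathlib

variable {V : Type*}

/-- `S` is an independent set of `G`: no two vertices of `S` are adjacent. -/
def IsIndepSet (G : SimpleGraph V) (S : Set V) : Prop :=
  ∀ ⦃u v : V⦄, u ∈ S → v ∈ S → ¬ G.Adj u v

/-- `S` is a maximal independent set of `G`. -/
def IsMaxIndepSet (G : SimpleGraph V) (S : Set V) : Prop :=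
  IsIndepSet G S ∧ ∀ T : Set V, IsIndepSet G T → S ⊆ T → S = T

/-- `m(G)`: the number of maximal independent sets of `G`. -/
noncomputable def numMaxIndep (G : SimpleGraph V) : ℕ :=
  {S : Set V | IsMaxIndepSet G S}.ncard

/-- `C` is a vertex cover of `G`: every edge has at least one endpoint in `C`. -/
def IsVertexCover (G : SimpleGraph V) (C : Set V) : Prop :=
  ∀ ⦃u v : V⦄, G.Adj u v → u ∈ C ∨ v ∈ C

/-- `β(G)`: the minimum size of a vertex cover of `G`. -/
noncomputable def coverNumber (G : SimpleGraph V) : ℕ :=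
  sInf {n : ℕ | ∃ C : Set V, IsVertexCover G C ∧ C.ncard = n}

/-- `M` is a matching of `G`: a set of edges of `G`, pairwise sharing no vertex. -/
def IsMatching (G : SimpleGraph V) (M : Set (Sym2 V)) : Prop :=
  M ⊆ G.edgeSet ∧ ∀ e ∈ M, ∀ f ∈ M, e ≠ f → ∀ v : V, v ∈ e → v ∉ f

/-- `M` is an induced matching of `G`: a matching such that no two distinct
edges of `M` are joined by an edge of `G`. -/
def IsInducedMatching (G : SimpleGraph V) (M : Set (Sym2 V)) : Prop :=
  IsMatching G M ∧ ∀ e ∈ M, ∀ f ∈ M, e ≠ f → ∀ u v : V, u ∈ e → v ∈ f → ¬ G.Adj u v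

/-- `ν(G)`: the maximum size of a matching of `G`. -/
noncomputable def matchingNumber (G : SimpleGraph V) : ℕ :=
  sSup {n : ℕ | ∃ M : Set (Sym2 V), IsMatching G M ∧ M.ncard = n}

/-- `ν₀(G)`: the maximum size of an induced matching of `G`. -/
noncomputable def inducedMatchingNumber (G : SimpleGraph V) : ℕ :=
  sSup {n : ℕ | ∃ M : Set (Sym2 V), IsInducedMatching G M ∧ M.ncard = n}

/-- `G` is bipartite: the vertices split into two sides with every edge crossing. -/
def IsBipartite (G : SimpleGraph V) : Prop :=
  ∃ A : Set V, ∀ ⦃u v : V⦄, G.Adj u v → (u ∈ A ↔ v ∉ A)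

set_option linter.unusedSectionVars false
namespace MISAux

lemma sym2_exists_pair (e : Sym2 V) : ∃ p : V × V, e = s(p.1, p.2) := by
  induction e using Sym2.ind with
  | _ a b => exact ⟨(a, b), rfl⟩

noncomputable def efst (e : Sym2 V) : V := (Classical.choose (sym2_exists_pair e)).1
noncomputable def esnd (e : Sym2 V) : V := (Classical.choose (sym2_exists_pair e)).2

lemma efst_esnd (e : Sym2 V) : e = s(efst e, esnd e) := Classical.choose_spec (sym2_exists_pair e)

lemma efst_mem (e : Sym2 V) : efst e ∈ e := by
  have h := Sym2.mem_mk_left (efst e) (esnd e)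
  rwa [← efst_esnd e] at h

lemma esnd_mem (e : Sym2 V) : esnd e ∈ e := by
  have h := Sym2.mem_mk_right (efst e) (esnd e)
  rwa [← efst_esnd e] at h

lemma eq_efst_or_esnd {e : Sym2 V} {v : V} (hv : v ∈ e) : v = efst e ∨ v = esnd e := by
  rw [efst_esnd e] at hv
  exact Sym2.mem_iff.mp hv

/-- The set of matched vertices. -/
def mSet (M : Set (Sym2 V)) : Set V := {v | ∃ e ∈ M, v ∈ e}

noncomputable def psi (S : Set V) (e : Sym2 V) : Fin 3 := by
  classical exact if efst e ∈ S then 1 else if esnd e ∈ S then 2 else 0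

lemma psi_zero {S : Set V} {e : Sym2 V} : psi S e = 0 ↔ efst e ∉ S ∧ esnd e ∉ S := by
  unfold psi; split <;> rename_i h
  · simp [h]
  · split <;> rename_i h2 <;> simp [h, h2]

lemma psi_one {S : Set V} {e : Sym2 V} : psi S e = 1 ↔ efst e ∈ S := by
  unfold psi; split <;> rename_i h
  · simp [h]
  · split <;> simp [h]

lemma psi_two {S : Set V} {e : Sym2 V} : psi S e = 2 ↔ efst e ∉ S ∧ esnd e ∈ S := by
  unfold psi; split <;> rename_i h
  · simp [h]
  · split <;> rename_i h2 <;> simp [h, h2]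

variable {G : SimpleGraph V}

lemma adj_of_mem {M : Set (Sym2 V)} (hM : IsMatching G M) {e : Sym2 V} (he : e ∈ M) :
    G.Adj (efst e) (esnd e) := by
  have h := hM.1 he
  rw [efst_esnd e] at h
  exact (G.mem_edgeSet).mp h

lemma max_indep_insert {S : Set V} (hS : IsMaxIndepSet G S) {v : V}
    (h : ∀ w ∈ S, ¬ G.Adj v w) : v ∈ S := by
  have hind : IsIndepSet G (insert v S) := by
    intro x y hx hy hadj
    rcases hx with rfl | hx <;> rcases hy with rfl | hy
    · exact G.loopless.irrefl _ hadj
    · exact h y hy hadj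
    · exact h x hx hadj.symm
    · exact hS.1 hx hy hadj
  have := hS.2 _ hind (Set.subset_insert _ _)
  rw [this]; exact Set.mem_insert _ _

lemma exists_adj_of_not_mem {S : Set V} (hS : IsMaxIndepSet G S) {v : V} (hv : v ∉ S) :
    ∃ w ∈ S, G.Adj v w := by
  by_contra h
  push_neg at h
  exact hv (max_indep_insert hS h)


lemma closed_mem {T : Set V} (hcl : ∀ x ∈ T, ∀ y, G.Adj x y → y ∈ T)
    {a v : V} (p : G.Walk a v) (ha : a ∈ T) : v ∈ T := by
  induction p with
  | nil => exact ha
  | cons h p ih => exact ih (hcl _ ha _ h)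

lemma supp_eq_of_closed {T : Set V} (hcl : ∀ x ∈ T, ∀ y, G.Adj x y → y ∈ T)
    {a : V} (ha : a ∈ T) (hT : ∀ x ∈ T, G.Reachable a x) :
    (G.connectedComponentMk a).supp = T := by
  ext v
  rw [SimpleGraph.ConnectedComponent.mem_supp_iff]
  constructor
  · intro h
    obtain ⟨p⟩ := (SimpleGraph.ConnectedComponent.exact h).symm
    exact closed_mem hcl p ha
  · intro h
    exact SimpleGraph.ConnectedComponent.sound ((hT v h).symm)

section Matching

variable [Fintype V] {M : Set (Sym2 V)}

lemma mem_mSet_of {e : Sym2 V} {v : V} (he : e ∈ M) (hv : v ∈ e) : v ∈ mSet M := ⟨e, he, hv⟩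

lemma unmatched_indep (hM : IsMatching G M)
    (hmax : ∀ M', IsMatching G M' → M'.ncard ≤ M.ncard)
    {u v : V} (hu : u ∉ mSet M) (hv : v ∉ mSet M) : ¬ G.Adj u v := by
  intro hadj
  classical
  have hnotmem : s(u, v) ∉ M := fun h => hu ⟨_, h, Sym2.mem_mk_left _ _⟩
  have hM' : IsMatching G (insert s(u, v) M) := by
    constructor
    · intro e he
      rcases he with rfl | he
      · exact (G.mem_edgeSet).mpr hadj
      · exact hM.1 he
    · intro e he f hf hef x hxe hxf
      rcases he with rfl | he <;> rcases hf with rfl | hf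
      · exact hef rfl
      · rcases Sym2.mem_iff.mp hxe with rfl | rfl
        · exact hu ⟨f, hf, hxf⟩
        · exact hv ⟨f, hf, hxf⟩
      · rcases Sym2.mem_iff.mp hxf with rfl | rfl
        · exact hu ⟨e, he, hxe⟩
        · exact hv ⟨e, he, hxe⟩
      · exact hM.2 e he f hf hef x hxe hxf
  have hcard : (insert s(u, v) M).ncard = M.ncard + 1 :=
    Set.ncard_insert_of_notMem hnotmem (Set.toFinite M)
  have := hmax _ hM'
  omega

lemma aug (hM : IsMatching G M)
    (hmax : ∀ M', IsMatching G M' → M'.ncard ≤ M.ncard)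
    {e : Sym2 V} (he : e ∈ M) {w w' : V}
    (hw : G.Adj (efst e) w) (hw' : G.Adj (esnd e) w')
    (hwm : w ∉ mSet M) (hw'm : w' ∉ mSet M) (hne : w ≠ w') : False := by
  classical
  set a := efst e with hadef
  set b := esnd e with hbdef
  have hamem : a ∈ e := efst_mem e
  have hbmem : b ∈ e := esnd_mem e
  have haM : a ∈ mSet M := ⟨e, he, hamem⟩
  have hbM : b ∈ mSet M := ⟨e, he, hbmem⟩
  have hab : a ≠ b := (adj_of_mem hM he).ne
  have haw : a ≠ w := fun h => hwm (h ▸ haM)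
  have haw' : a ≠ w' := fun h => hw'm (h ▸ haM)
  have hbw : b ≠ w := fun h => hwm (h ▸ hbM)
  have hbw' : b ≠ w' := fun h => hw'm (h ▸ hbM)
  -- new matching
  set M' : Set (Sym2 V) := insert s(a, w) (insert s(b, w') (M \ {e})) with hM'def
  have hvert1 : ∀ x, x ∈ s(a,w) → x = a ∨ x = w := fun x hx => Sym2.mem_iff.mp hx
  have hvert2 : ∀ x, x ∈ s(b,w') → x = b ∨ x = w' := fun x hx => Sym2.mem_iff.mp hx
  have hdisj_old : ∀ f ∈ M, f ≠ e → ∀ x, x ∈ f → x ∉ s(a,w) ∧ x ∉ s(b,w') := by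
    intro f hf hfe x hxf
    constructor
    · intro hx
      rcases hvert1 x hx with rfl | rfl
      · exact hM.2 e he f hf (fun h => hfe h.symm) a hamem hxf
      · exact hwm ⟨f, hf, hxf⟩
    · intro hx
      rcases hvert2 x hx with rfl | rfl
      · exact hM.2 e he f hf (fun h => hfe h.symm) b hbmem hxf
      · exact hw'm ⟨f, hf, hxf⟩
  have hnew_ne : s(a,w) ≠ s(b,w') := by
    intro h
    rcases Sym2.eq_iff.mp h with ⟨h1, _⟩ | ⟨h1, _⟩
    · exact hab h1
    · exact haw' h1
  have hM'm : IsMatching G M' := by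
    constructor
    · intro f hf
      rcases hf with rfl | rfl | hf
      · exact (G.mem_edgeSet).mpr hw
      · exact (G.mem_edgeSet).mpr hw'
      · exact hM.1 hf.1
    · intro f hf g hg hfg x hxf hxg
      have hcases : ∀ h ∈ M', h = s(a,w) ∨ h = s(b,w') ∨ (h ∈ M ∧ h ≠ e) := by
        intro h hh
        rcases Set.mem_insert_iff.mp hh with h1 | hh
        · exact Or.inl h1
        · rcases Set.mem_insert_iff.mp hh with h1 | hh
          · exact Or.inr (Or.inl h1)
          · exact Or.inr (Or.inr ⟨hh.1, fun hq => hh.2 (Set.mem_singleton_iff.mpr hq)⟩)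
      rcases hcases f hf with hf1 | hf1 | ⟨hfM, hfe⟩ <;> rcases hcases g hg with hg1 | hg1 | ⟨hgM, hge⟩
      · exact hfg (hf1.trans hg1.symm)
      · rw [hf1] at hxf
        rw [hg1] at hxg
        rcases Sym2.mem_iff.mp hxf with rfl | rfl <;> rcases Sym2.mem_iff.mp hxg with h | h
        · exact hab h
        · exact haw' h
        · exact hbw h.symm
        · exact hne h
      · rw [hf1] at hxf
        rcases Sym2.mem_iff.mp hxf with rfl | rfl
        · exact hM.2 e he g hgM (fun h => hge h.symm) _ hamem hxg
        · exact hwm ⟨g, hgM, hxg⟩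
      · rw [hf1] at hxf
        rw [hg1] at hxg
        rcases Sym2.mem_iff.mp hxf with rfl | rfl <;> rcases Sym2.mem_iff.mp hxg with h | h
        · exact hab h.symm
        · exact hbw h
        · exact haw' h.symm
        · exact hne h.symm
      · exact hfg (hf1.trans hg1.symm)
      · rw [hf1] at hxf
        rcases Sym2.mem_iff.mp hxf with rfl | rfl
        · exact hM.2 e he g hgM (fun h => hge h.symm) _ hbmem hxg
        · exact hw'm ⟨g, hgM, hxg⟩
      · rw [hg1] at hxg
        rcases Sym2.mem_iff.mp hxg with rfl | rfl
        · exact hM.2 e he f hfM (fun h => hfe h.symm) _ hamem hxf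
        · exact hwm ⟨f, hfM, hxf⟩
      · rw [hg1] at hxg
        rcases Sym2.mem_iff.mp hxg with rfl | rfl
        · exact hM.2 e he f hfM (fun h => hfe h.symm) _ hbmem hxf
        · exact hw'm ⟨f, hfM, hxf⟩
      · exact hM.2 f hfM g hgM hfg x hxf hxg
  -- cardinality
  have h1 : s(b, w') ∉ M \ {e} := by
    rintro ⟨hmem, -⟩
    exact hw'm ⟨_, hmem, Sym2.mem_mk_right _ _⟩
  have h2 : s(a, w) ∉ insert s(b, w') (M \ {e}) := by
    rintro (h | ⟨hmem, -⟩)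
    · exact hnew_ne h
    · exact hwm ⟨_, hmem, Sym2.mem_mk_right _ _⟩
  have hc1 : (M \ {e}).ncard + 1 = M.ncard := Set.ncard_diff_singleton_add_one he (Set.toFinite M)
  have hc2 : (insert s(b, w') (M \ {e})).ncard = (M \ {e}).ncard + 1 :=
    Set.ncard_insert_of_notMem h1 (Set.toFinite _)
  have hc3 : M'.ncard = (insert s(b, w') (M \ {e})).ncard + 1 :=
    Set.ncard_insert_of_notMem h2 (Set.toFinite _)
  have := hmax M' hM'm
  omega

lemma ext_unmatched (hM : IsMatching G M)
    (hmax : ∀ M', IsMatching G M' → M'.ncard ≤ M.ncard)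
    {S : Set V} (hS : IsMaxIndepSet G S) {u : V} (hu : u ∉ mSet M) :
    u ∈ S ↔ ∀ w ∈ mSet M, G.Adj u w → w ∉ S := by
  constructor
  · intro huS w _ hadj hwS
    exact hS.1 huS hwS hadj
  · intro h
    apply max_indep_insert hS
    intro w hwS hadj
    by_cases hw : w ∈ mSet M
    · exact h w hw hadj hwS
    · exact unmatched_indep hM hmax hu hw hadj

lemma snd_mem_iff_psi_two (hM : IsMatching G M) {e : Sym2 V} (he : e ∈ M)
    {S : Set V} (hind : IsIndepSet G S) : esnd e ∈ S ↔ psi S e = 2 := by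
  rw [psi_two]
  constructor
  · intro h
    exact ⟨fun hf => hind hf h (adj_of_mem hM he), h⟩
  · exact fun h => h.2

lemma psi_inj (hM : IsMatching G M)
    (hmax : ∀ M', IsMatching G M' → M'.ncard ≤ M.ncard)
    {S S' : Set V} (hS : IsMaxIndepSet G S) (hS' : IsMaxIndepSet G S')
    (h : ∀ e ∈ M, psi S e = psi S' e) : S = S' := by
  have hmatch : ∀ v ∈ mSet M, (v ∈ S ↔ v ∈ S') := by
    rintro v ⟨e, heM, hve⟩
    have hpsi := h e heM
    rcases eq_efst_or_esnd hve with rfl | rfl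
    · rw [← psi_one (S := S), ← psi_one (S := S'), hpsi]
    · rw [snd_mem_iff_psi_two hM heM hS.1, snd_mem_iff_psi_two hM heM hS'.1, hpsi]
  ext v
  by_cases hv : v ∈ mSet M
  · exact hmatch v hv
  · rw [ext_unmatched hM hmax hS hv, ext_unmatched hM hmax hS' hv]
    exact ⟨fun h w hw ha hw' => h w hw ha ((hmatch w hw).mpr hw'),
           fun h w hw ha hw' => h w hw ha ((hmatch w hw).mp hw')⟩

end Matching

lemma third_elt {α : Type*} {P : Set α} (hfin : P.Finite) (h3 : P.ncard = 3) {a b : α}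
    (ha : a ∈ P) (hb : b ∈ P) (hab : a ≠ b) :
    ∃ c, c ≠ a ∧ c ≠ b ∧ P = {a, b, c} := by
  have hsub : ({a, b} : Set α) ⊆ P := by
    intro t ht
    rcases ht with rfl | ht
    · exact ha
    · rw [Set.mem_singleton_iff] at ht
      exact ht ▸ hb
  have hd : (P \ {a, b}).ncard = 1 := by
    rw [Set.ncard_diff hsub (hfin.subset hsub), Set.ncard_pair hab, h3]
  obtain ⟨c, hc⟩ := Set.ncard_eq_one.mp hd
  have hcmem : c ∈ P \ {a, b} := hc ▸ rfl
  refine ⟨c, fun h => hcmem.2 (Or.inl h), fun h => hcmem.2 (Or.inr h), ?_⟩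
  ext t
  constructor
  · intro ht
    by_cases h1 : t = a
    · exact Or.inl h1
    by_cases h2 : t = b
    · exact Or.inr (Or.inl h2)
    have : t ∈ P \ {a, b} := by
      refine ⟨ht, fun h => ?_⟩
      rcases h with h | h
      · exact h1 h
      · exact h2 (Set.mem_singleton_iff.mp h)
    rw [hc] at this
    exact Or.inr (Or.inr this)
  · intro ht
    rcases ht with rfl | rfl | ht
    · exact ha
    · exact hb
    · rw [Set.mem_singleton_iff] at ht
      exact ht ▸ hcmem.1

lemma fin3_cases (x : Fin 3) : x = 0 ∨ x = 1 ∨ x = 2 := by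
  fin_cases x <;> simp

end MISAux

open MISAux in
theorem aux_numMaxIndep_eq_three_pow [Fintype V] (G : SimpleGraph V) :
    ({S : Set V | IsMaxIndepSet G S}.ncard) = 3 ^ (sSup {n : ℕ | ∃ M : Set (Sym2 V), IsMatching G M ∧ M.ncard = n}) ↔
      ∀ c : G.ConnectedComponent,
        c.supp.ncard = 1 ∨
          (c.supp.ncard = 3 ∧ ∀ u ∈ c.supp, ∀ v ∈ c.supp, u ≠ v → G.Adj u v) := by
  classical
  set ν := sSup {n : ℕ | ∃ M : Set (Sym2 V), IsMatching G M ∧ M.ncard = n} with hν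
  obtain ⟨M, hM, hMcard, hmax⟩ :
      ∃ M, IsMatching G M ∧ M.ncard = ν ∧ ∀ M', IsMatching G M' → M'.ncard ≤ M.ncard := by
    have hne : ({n : ℕ | ∃ M : Set (Sym2 V), IsMatching G M ∧ M.ncard = n}).Nonempty :=
      ⟨0, ∅, ⟨Set.empty_subset _, by simp⟩, by simp⟩
    have hbdd : BddAbove {n : ℕ | ∃ M : Set (Sym2 V), IsMatching G M ∧ M.ncard = n} := by
      refine ⟨(Set.univ : Set (Sym2 V)).ncard, ?_⟩
      rintro n ⟨M, -, rfl⟩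
      exact Set.ncard_le_ncard (Set.subset_univ M) Set.finite_univ
    obtain ⟨M, hM, hc⟩ := Nat.sSup_mem hne hbdd
    exact ⟨M, hM, hc, fun M' hM' => hc ▸ le_csSup hbdd ⟨M', hM', rfl⟩⟩
  have hedge : ∀ e ∈ M, G.Adj (efst e) (esnd e) := fun e he => adj_of_mem hM he
  set A := {S : Set V | IsMaxIndepSet G S} with hA
  let Ψ : A → (↥M → Fin 3) := fun S e => psi S.1 e.1
  have hinj : Function.Injective Ψ := by
    intro S S' h
    exact Subtype.ext (psi_inj hM hmax S.2 S'.2 fun e he => congrFun h ⟨e, he⟩)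
  have hFcard : Nat.card (↥M → Fin 3) = 3 ^ ν := by
    rw [Nat.card_fun, Nat.card_coe_set_eq, hMcard, Nat.card_eq_fintype_card,
      Fintype.card_fin]
  have key : A.ncard = 3 ^ ν ↔ Function.Surjective Ψ := by
    rw [← Nat.card_coe_set_eq, ← hFcard]
    constructor
    · intro h
      exact ((Nat.bijective_iff_injective_and_card Ψ).mpr ⟨hinj, h⟩).2
    · intro h
      exact Nat.card_eq_of_bijective Ψ ⟨hinj, h⟩
  rw [key]
  constructor
  · -- surjective → structure
    intro hsurj c
    have obtainS : ∀ g : ↥M → Fin 3, ∃ S, IsMaxIndepSet G S ∧ ∀ e : ↥M, psi S e.1 = g e := by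
      intro g
      obtain ⟨⟨S, hS⟩, h⟩ := hsurj g
      exact ⟨S, hS, fun e => congrFun h e⟩
    have claimC : ∀ e ∈ M, ∃ c0, c0 ∉ mSet M ∧ G.Adj (efst e) c0 ∧ G.Adj (esnd e) c0 ∧
        (∀ x, x ∉ mSet M → (G.Adj (efst e) x ∨ G.Adj (esnd e) x) → x = c0) := by
      intro e he
      obtain ⟨S, hS, hpsi⟩ := obtainS (fun _ => 0)
      have hSU : ∀ v ∈ S, v ∉ mSet M := by
        rintro v hv ⟨e', he', hve'⟩
        have h0 := psi_zero.mp (hpsi ⟨e', he'⟩)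
        rcases eq_efst_or_esnd hve' with rfl | rfl
        · exact h0.1 hv
        · exact h0.2 hv
      have ha : efst e ∉ S := fun h => (hSU _ h) ⟨e, he, efst_mem e⟩
      have hb : esnd e ∉ S := fun h => (hSU _ h) ⟨e, he, esnd_mem e⟩
      obtain ⟨w, hwS, hwadj⟩ := exists_adj_of_not_mem hS ha
      obtain ⟨w', hw'S, hw'adj⟩ := exists_adj_of_not_mem hS hb
      have hww' : w = w' := by
        by_contra hne
        exact aug hM hmax he hwadj hw'adj (hSU _ hwS) (hSU _ hw'S) hne
      subst hww'
      refine ⟨w, hSU _ hwS, hwadj, hw'adj, ?_⟩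
      intro x hxU hadjx
      by_contra hxw
      rcases hadjx with h | h
      · exact aug hM hmax he h hw'adj hxU (hSU _ hwS) hxw
      · exact aug hM hmax he hwadj h (hSU _ hwS) hxU (fun hq => hxw hq.symm)
    have claimD : ∀ e ∈ M, ∀ e' ∈ M, e ≠ e' → ∀ v ∈ e, ∀ w ∈ e', ¬ G.Adj v w := by
      intro e he e' he' hnee v hv w hw hadj
      set g : ↥M → Fin 3 := fun x =>
        if x = (⟨e, he⟩ : ↥M) then (if v = efst e then 1 else 2)
        else if x = (⟨e', he'⟩ : ↥M) then (if w = efst e' then 1 else 2) else 0 with hgdef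
      obtain ⟨S, hS, hpsi⟩ := obtainS g
      have hvS : v ∈ S := by
        have h : psi S e = (if v = efst e then 1 else 2) := by
          have h0 := hpsi ⟨e, he⟩
          simpa [hgdef] using h0
        rcases eq_efst_or_esnd hv with rfl | rfl
        · rw [if_pos rfl] at h
          exact psi_one.mp h
        · rw [if_neg (hedge e he).ne'] at h
          exact (psi_two.mp h).2
      have hwS : w ∈ S := by
        have h : psi S e' = (if w = efst e' then 1 else 2) := by
          have h0 := hpsi ⟨e', he'⟩
          simpa [hgdef, Ne.symm hnee] using h0
        rcases eq_efst_or_esnd hw with rfl | rfl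
        · rw [if_pos rfl] at h
          exact psi_one.mp h
        · rw [if_neg (hedge e' he').ne'] at h
          exact (psi_two.mp h).2
      exact hS.1 hvS hwS hadj
    have claimE : ∀ e ∈ M, ∀ e' ∈ M, e ≠ e' → ∀ u, u ∉ mSet M →
        (G.Adj (efst e) u ∨ G.Adj (esnd e) u) →
        (G.Adj (efst e') u ∨ G.Adj (esnd e') u) → False := by
      intro e he e' he' hnee u hU hadjE hadjE'
      obtain ⟨c0, hc0U, hc01, hc02, hc0uniq⟩ := claimC e he
      obtain ⟨c1, hc1U, hc11, hc12, hc1uniq⟩ := claimC e' he'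
      have huc0 : u = c0 := hc0uniq u hU hadjE
      have huc1 : u = c1 := hc1uniq u hU hadjE'
      set g : ↥M → Fin 3 := fun x => if x = (⟨e, he⟩ : ↥M) then 1 else 0 with hgdef
      obtain ⟨S, hS, hpsi⟩ := obtainS g
      have hfsteS : efst e ∈ S := by
        have h : psi S e = 1 := by
          have h0 := hpsi ⟨e, he⟩
          simpa [hgdef] using h0
        exact psi_one.mp h
      have hz : ∀ (x : ↥M), x.1 ≠ e → efst x.1 ∉ S ∧ esnd x.1 ∉ S := by
        intro x hx
        have hxne : x ≠ (⟨e, he⟩ : ↥M) := fun hq => hx (congrArg Subtype.val hq)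
        have h : psi S x.1 = 0 := by
          have h0 := hpsi x
          simpa [hgdef, hxne] using h0
        exact psi_zero.mp h
      have hSmatched : ∀ y ∈ S, y ∈ mSet M → y = efst e := by
        rintro y hyS ⟨e'', he'', hye''⟩
        by_cases h : e'' = e
        · subst h
          rcases eq_efst_or_esnd hye'' with rfl | rfl
          · rfl
          · exact (hS.1 hfsteS hyS (hedge e'' he'')).elim
        · rcases eq_efst_or_esnd hye'' with rfl | rfl
          · exact ((hz ⟨e'', he''⟩ h).1 hyS).elim
          · exact ((hz ⟨e'', he''⟩ h).2 hyS).elim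
      have hfste' : efst e' ∉ S := (hz ⟨e', he'⟩ (fun hq => hnee hq.symm)).1
      obtain ⟨y, hyS, hyadj⟩ := exists_adj_of_not_mem hS hfste'
      by_cases hyM : y ∈ mSet M
      · have hy : y = efst e := hSmatched y hyS hyM
        subst hy
        exact claimD e' he' e he (fun hq => hnee hq.symm) _ (efst_mem e') _ (efst_mem e) hyadj
      · have hyc1 : y = c1 := hc1uniq y hyM (Or.inl hyadj)
        have hAdj : G.Adj (efst e) y := by
          rw [hyc1, ← huc1, huc0]
          exact hc01
        exact hS.1 hfsteS hyS hAdj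
    have tri : ∀ e ∈ M,
        ((G.connectedComponentMk (efst e)).supp.ncard = 3 ∧
          ∀ u ∈ (G.connectedComponentMk (efst e)).supp,
            ∀ v ∈ (G.connectedComponentMk (efst e)).supp, u ≠ v → G.Adj u v) := by
      intro e he
      obtain ⟨c0, hc0U, hc01, hc02, hc0uniq⟩ := claimC e he
      have hab : G.Adj (efst e) (esnd e) := hedge e he
      have hmem3 : ∀ u ∈ ({efst e, esnd e, c0} : Set V), u = efst e ∨ u = esnd e ∨ u = c0 := by
        intro u hu
        simpa using hu
      have hcl : ∀ x ∈ ({efst e, esnd e, c0} : Set V), ∀ y, G.Adj x y →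
          y ∈ ({efst e, esnd e, c0} : Set V) := by
        intro x hx y hxy
        rcases hmem3 x hx with rfl | rfl | rfl
        · by_cases hyM : y ∈ mSet M
          · obtain ⟨e'', he'', hye⟩ := hyM
            by_cases h : e'' = e
            · subst h
              rcases eq_efst_or_esnd hye with rfl | rfl
              · exact Or.inl rfl
              · exact Or.inr (Or.inl rfl)
            · exact absurd hxy.symm
                (claimD e'' he'' e he h _ hye _ (efst_mem e))
          · have : y = c0 := hc0uniq y hyM (Or.inl hxy)
            exact Or.inr (Or.inr (by rw [this]; exact rfl))
        · by_cases hyM : y ∈ mSet M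
          · obtain ⟨e'', he'', hye⟩ := hyM
            by_cases h : e'' = e
            · subst h
              rcases eq_efst_or_esnd hye with rfl | rfl
              · exact Or.inl rfl
              · exact Or.inr (Or.inl rfl)
            · exact absurd hxy.symm
                (claimD e'' he'' e he h _ hye _ (esnd_mem e))
          · have : y = c0 := hc0uniq y hyM (Or.inr hxy)
            exact Or.inr (Or.inr (by rw [this]; exact rfl))
        · by_cases hyM : y ∈ mSet M
          · obtain ⟨e'', he'', hye⟩ := hyM
            by_cases h : e'' = e
            · subst h
              rcases eq_efst_or_esnd hye with rfl | rfl
              · exact Or.inl rfl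
              · exact Or.inr (Or.inl rfl)
            · exfalso
              refine claimE e he e'' he'' (fun hq => h hq.symm) x hc0U (Or.inl hc01) ?_
              rcases eq_efst_or_esnd hye with rfl | rfl
              · exact Or.inl hxy.symm
              · exact Or.inr hxy.symm
          · exact absurd hxy (unmatched_indep hM hmax hc0U hyM)
      have hreach : ∀ x ∈ ({efst e, esnd e, c0} : Set V), G.Reachable (efst e) x := by
        intro x hx
        rcases hmem3 x hx with rfl | rfl | rfl
        · exact SimpleGraph.Reachable.refl _
        · exact hab.reachable
        · exact hc01.reachable
      have hsupp : (G.connectedComponentMk (efst e)).supp = {efst e, esnd e, c0} :=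
        supp_eq_of_closed hcl (Or.inl rfl) hreach
      have hd1 : efst e ≠ esnd e := hab.ne
      have hd2 : efst e ≠ c0 := hc01.ne
      have hd3 : esnd e ≠ c0 := hc02.ne
      constructor
      · rw [hsupp, Set.ncard_insert_of_notMem (by
          simp only [Set.mem_insert_iff, Set.mem_singleton_iff]
          push_neg
          exact ⟨hd1, hd2⟩), Set.ncard_pair hd3]
      · rw [hsupp]
        intro u hu v hv huv
        rcases hmem3 u hu with rfl | rfl | rfl <;> rcases hmem3 v hv with rfl | rfl | rfl <;>
          first
            | exact absurd rfl huv
            | exact hab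
            | exact hab.symm
            | exact hc01
            | exact hc01.symm
            | exact hc02
            | exact hc02.symm
    induction c using SimpleGraph.ConnectedComponent.ind with | _ v => ?_
    by_cases hvM : v ∈ mSet M
    · obtain ⟨e, he, hve⟩ := hvM
      have hcomp : G.connectedComponentMk v = G.connectedComponentMk (efst e) := by
        rcases eq_efst_or_esnd hve with rfl | rfl
        · rfl
        · exact SimpleGraph.ConnectedComponent.sound (hedge e he).symm.reachable
      rw [hcomp]
      exact Or.inr (tri e he)
    · by_cases hadj : ∃ w, G.Adj v w
      · obtain ⟨w, hw⟩ := hadj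
        have hwM : w ∈ mSet M := by
          by_contra hwM
          exact unmatched_indep hM hmax hvM hwM hw
        obtain ⟨e, he, hwe⟩ := hwM
        obtain ⟨c0, hc0U, hc01, hc02, hc0uniq⟩ := claimC e he
        have hvc : v = c0 := by
          apply hc0uniq v hvM
          rcases eq_efst_or_esnd hwe with rfl | rfl
          · exact Or.inl hw.symm
          · exact Or.inr hw.symm
        have hcomp : G.connectedComponentMk v = G.connectedComponentMk (efst e) := by
          rw [hvc]
          exact SimpleGraph.ConnectedComponent.sound hc01.symm.reachable
        rw [hcomp]
        exact Or.inr (tri e he)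
      · push_neg at hadj
        left
        have hsupp : (G.connectedComponentMk v).supp = {v} := by
          apply supp_eq_of_closed
          · intro x hx y hxy
            rw [Set.mem_singleton_iff] at hx
            subst hx
            exact absurd hxy (hadj y)
          · exact rfl
          · intro x hx
            rw [Set.mem_singleton_iff] at hx
            subst hx
            exact SimpleGraph.Reachable.refl _
        rw [hsupp, Set.ncard_singleton]
  · -- structure → surjective
    intro hstruct f
    have comp_edge : ∀ {u v : V}, G.Adj u v →
        ((G.connectedComponentMk u).supp.ncard = 3 ∧
          ∀ x ∈ (G.connectedComponentMk u).supp, ∀ y ∈ (G.connectedComponentMk u).supp,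
            x ≠ y → G.Adj x y) := by
      intro u v huv
      rcases hstruct (G.connectedComponentMk u) with h1 | h3
      · exfalso
        obtain ⟨x, hx⟩ := Set.ncard_eq_one.mp h1
        have hu : u ∈ (G.connectedComponentMk u).supp :=
          (SimpleGraph.ConnectedComponent.mem_supp_iff _ _).mpr rfl
        have hv : v ∈ (G.connectedComponentMk u).supp :=
          (SimpleGraph.ConnectedComponent.mem_supp_iff _ _).mpr
            (SimpleGraph.ConnectedComponent.sound huv.symm.reachable)
        rw [hx] at hu hv
        exact huv.ne (hu.trans hv.symm)
      · exact h3
    have hsame : ∀ e ∈ M, ∀ x ∈ e,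
        G.connectedComponentMk x = G.connectedComponentMk (efst e) := by
      intro e he x hx
      rcases eq_efst_or_esnd hx with rfl | rfl
      · rfl
      · exact SimpleGraph.ConnectedComponent.sound (hedge e he).symm.reachable
    have diff_comp : ∀ e ∈ M, ∀ e' ∈ M, e ≠ e' → ∀ u ∈ e, ∀ v ∈ e',
        G.connectedComponentMk u ≠ G.connectedComponentMk v := by
      intro e he e' he' hnee u hu v hv heq
      have h3 : (G.connectedComponentMk u).supp.ncard = 3 := by
        have := (comp_edge (hedge e he)).1
        rw [hsame e he u hu]
        exact this
      have hcross : ∀ x ∈ e, ∀ y ∈ e', x ≠ y := by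
        intro x hx y hy hxy
        exact hM.2 e he e' he' hnee x hx (hxy ▸ hy)
      set P := (G.connectedComponentMk u).supp with hPdef
      have hmemP : ∀ x ∈ e, x ∈ P := by
        intro x hx
        rw [hPdef, SimpleGraph.ConnectedComponent.mem_supp_iff,
          hsame e he x hx, ← hsame e he u hu]
      have hmemP' : ∀ x ∈ e', x ∈ P := by
        intro x hx
        rw [hPdef, SimpleGraph.ConnectedComponent.mem_supp_iff,
          hsame e' he' x hx, ← hsame e' he' v hv, ← heq]
      have ha := hmemP _ (efst_mem e)
      have hb := hmemP _ (esnd_mem e)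
      have ha' := hmemP' _ (efst_mem e')
      have hb' := hmemP' _ (esnd_mem e')
      have h1 : efst e ≠ esnd e := (hedge e he).ne
      have h2 : efst e' ≠ esnd e' := (hedge e' he').ne
      have h3' : efst e ≠ efst e' := hcross _ (efst_mem e) _ (efst_mem e')
      have h4 : efst e ≠ esnd e' := hcross _ (efst_mem e) _ (esnd_mem e')
      have h5 : esnd e ≠ efst e' := hcross _ (esnd_mem e) _ (efst_mem e')
      have h6 : esnd e ≠ esnd e' := hcross _ (esnd_mem e) _ (esnd_mem e')
      have hsub : ({efst e, esnd e, efst e', esnd e'} : Set V) ⊆ P := by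
        intro t ht
        rcases ht with rfl | rfl | rfl | ht
        · exact ha
        · exact hb
        · exact ha'
        · rw [Set.mem_singleton_iff] at ht
          exact ht ▸ hb'
      have hcard4 : ({efst e, esnd e, efst e', esnd e'} : Set V).ncard = 4 := by
        rw [Set.ncard_insert_of_notMem (by
          simp only [Set.mem_insert_iff, Set.mem_singleton_iff]
          push_neg
          exact ⟨h1, h3', h4⟩), Set.ncard_insert_of_notMem (by
          simp only [Set.mem_insert_iff, Set.mem_singleton_iff]
          push_neg
          exact ⟨h5, h6⟩), Set.ncard_pair h2]
      have := Set.ncard_le_ncard hsub (Set.toFinite P)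
      omega
    have tri : ∀ e ∈ M, ∃ c, c ∉ mSet M ∧ c ≠ efst e ∧ c ≠ esnd e ∧
        G.Adj (efst e) c ∧ G.Adj (esnd e) c ∧
        (∀ w, G.Adj c w → w = efst e ∨ w = esnd e) := by
      intro e he
      have hadj := hedge e he
      obtain ⟨h3, hclq⟩ := comp_edge hadj
      set P := (G.connectedComponentMk (efst e)).supp with hPdef
      have hfstP : efst e ∈ P := (SimpleGraph.ConnectedComponent.mem_supp_iff _ _).mpr rfl
      have hsndP : esnd e ∈ P := (SimpleGraph.ConnectedComponent.mem_supp_iff _ _).mpr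
        (SimpleGraph.ConnectedComponent.sound hadj.symm.reachable)
      obtain ⟨c, hca, hcb, hPeq⟩ := third_elt (Set.toFinite P) h3 hfstP hsndP hadj.ne
      have hcP : c ∈ P := by
        rw [hPeq]
        exact Or.inr (Or.inr rfl)
      have hcadj1 : G.Adj (efst e) c := hclq _ hfstP _ hcP (Ne.symm hca)
      have hcadj2 : G.Adj (esnd e) c := hclq _ hsndP _ hcP (Ne.symm hcb)
      have hnbr : ∀ w, G.Adj c w → w = efst e ∨ w = esnd e := by
        intro w hw
        have hwP : w ∈ P := by
          rw [hPdef, SimpleGraph.ConnectedComponent.mem_supp_iff]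
          exact (SimpleGraph.ConnectedComponent.sound hw.symm.reachable).trans hcP
        rw [hPeq] at hwP
        rcases hwP with h | h | h
        · exact Or.inl h
        · exact Or.inr h
        · rw [Set.mem_singleton_iff] at h
          subst h
          exact absurd hw (G.loopless.irrefl w)
      have hcU : c ∉ mSet M := by
        rintro ⟨e', he', hce'⟩
        by_cases hee' : e' = e
        · subst hee'
          rcases eq_efst_or_esnd hce' with h | h
          · exact hca h
          · exact hcb h
        · exact diff_comp e' he' e he hee' c hce' (efst e) (efst_mem e) hcP
      exact ⟨c, hcU, hca, hcb, hcadj1, hcadj2, hnbr⟩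
    -- construct the maximal independent set realizing pattern f
    set chosen : Set V :=
      {v | ∃ e : ↥M, (f e = 1 ∧ v = efst e.1) ∨ (f e = 2 ∧ v = esnd e.1)} with hchdef
    set S : Set V := chosen ∪ {u | u ∉ mSet M ∧ ∀ w ∈ chosen, ¬ G.Adj u w} with hSdef
    have hch_sub : ∀ v ∈ chosen, ∃ e : ↥M, v ∈ e.1 := by
      rintro v ⟨e, (⟨h, rfl⟩ | ⟨h, rfl⟩)⟩
      · exact ⟨e, efst_mem _⟩
      · exact ⟨e, esnd_mem _⟩
    have hsub_ne : ∀ (e e' : ↥M), e.1 ≠ e'.1 → (e ≠ e') := fun e e' h hq => h (by rw [hq])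
    have hch_fst : ∀ e : ↥M, (efst e.1 ∈ chosen ↔ f e = 1) := by
      intro e
      constructor
      · rintro ⟨e', (⟨h1, heq⟩ | ⟨h2, heq⟩)⟩
        · have hmem : efst e.1 ∈ e'.1 := by rw [heq]; exact efst_mem _
          have hee' : e = e' := by
            by_contra hne
            exact hM.2 e.1 e.2 e'.1 e'.2 (fun h => hne (Subtype.ext h)) _ (efst_mem e.1) hmem
          rw [hee']
          exact h1
        · have hmem : efst e.1 ∈ e'.1 := by rw [heq]; exact esnd_mem _
          have hee' : e = e' := by
            by_contra hne
            exact hM.2 e.1 e.2 e'.1 e'.2 (fun h => hne (Subtype.ext h)) _ (efst_mem e.1) hmem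
          rw [hee'] at heq
          exact absurd heq (hedge e'.1 e'.2).ne
      · intro h
        exact ⟨e, Or.inl ⟨h, rfl⟩⟩
    have hch_snd : ∀ e : ↥M, (esnd e.1 ∈ chosen ↔ f e = 2) := by
      intro e
      constructor
      · rintro ⟨e', (⟨h1, heq⟩ | ⟨h2, heq⟩)⟩
        · have hmem : esnd e.1 ∈ e'.1 := by rw [heq]; exact efst_mem _
          have hee' : e = e' := by
            by_contra hne
            exact hM.2 e.1 e.2 e'.1 e'.2 (fun h => hne (Subtype.ext h)) _ (esnd_mem e.1) hmem
          rw [hee'] at heq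
          exact absurd heq.symm (hedge e'.1 e'.2).ne
        · have hmem : esnd e.1 ∈ e'.1 := by rw [heq]; exact esnd_mem _
          have hee' : e = e' := by
            by_contra hne
            exact hM.2 e.1 e.2 e'.1 e'.2 (fun h => hne (Subtype.ext h)) _ (esnd_mem e.1) hmem
          rw [hee']
          exact h2
      · intro h
        exact ⟨e, Or.inr ⟨h, rfl⟩⟩
    have hSmatch : ∀ v ∈ mSet M, (v ∈ S ↔ v ∈ chosen) := by
      intro v hvM
      constructor
      · intro hvS
        rcases hvS with h | h
        · exact h
        · exact absurd hvM h.1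
      · exact fun h => Or.inl h
    have hind : IsIndepSet G S := by
      intro x y hx hy hadj
      rcases hx with hx | hx <;> rcases hy with hy | hy
      · obtain ⟨e, hxe⟩ := hch_sub x hx
        obtain ⟨e', hye'⟩ := hch_sub y hy
        by_cases hee' : e.1 = e'.1
        · have hye : y ∈ e.1 := by rw [hee']; exact hye'
          rcases eq_efst_or_esnd hxe with hx1 | hx1 <;>
            rcases eq_efst_or_esnd hye with hy1 | hy1
          · exact hadj.ne (hx1.trans hy1.symm)
          · have h1 := (hch_fst e).mp (hx1 ▸ hx)
            have h2 := (hch_snd e).mp (hy1 ▸ hy)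
            exact absurd (h1.symm.trans h2) (by decide)
          · have h1 := (hch_snd e).mp (hx1 ▸ hx)
            have h2 := (hch_fst e).mp (hy1 ▸ hy)
            exact absurd (h1.symm.trans h2) (by decide)
          · exact hadj.ne (hx1.trans hy1.symm)
        · exact diff_comp e.1 e.2 e'.1 e'.2 hee' x hxe y hye'
            (SimpleGraph.ConnectedComponent.sound hadj.reachable)
      · exact hy.2 x hx hadj.symm
      · exact hx.2 y hy hadj
      · exact unmatched_indep hM hmax hx.1 hy.1 hadj
    have hcover : ∀ v, v ∉ S → ∃ w ∈ S, G.Adj v w := by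
      intro v hv
      by_cases hvM : v ∈ mSet M
      · obtain ⟨e0, he0, hve⟩ := hvM
        rcases fin3_cases (f ⟨e0, he0⟩) with h0 | h1 | h2
        · obtain ⟨c, hcU, hca, hcb, hadj1, hadj2, hnbr⟩ := tri e0 he0
          have hcS : c ∈ S := by
            refine Or.inr ⟨hcU, ?_⟩
            intro w hwch hcw
            rcases hnbr w hcw with rfl | rfl
            · exact absurd (h0.symm.trans ((hch_fst ⟨e0, he0⟩).mp hwch)) (by decide)
            · exact absurd (h0.symm.trans ((hch_snd ⟨e0, he0⟩).mp hwch)) (by decide)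
          rcases eq_efst_or_esnd hve with rfl | rfl
          · exact ⟨c, hcS, hadj1⟩
          · exact ⟨c, hcS, hadj2⟩
        · have hfstS : efst e0 ∈ S := Or.inl ((hch_fst ⟨e0, he0⟩).mpr h1)
          rcases eq_efst_or_esnd hve with rfl | rfl
          · exact absurd hfstS hv
          · exact ⟨efst e0, hfstS, (hedge e0 he0).symm⟩
        · have hsndS : esnd e0 ∈ S := Or.inl ((hch_snd ⟨e0, he0⟩).mpr h2)
          rcases eq_efst_or_esnd hve with rfl | rfl
          · exact ⟨esnd e0, hsndS, hedge e0 he0⟩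
          · exact absurd hsndS hv
      · have hne : ¬ (∀ w ∈ chosen, ¬ G.Adj v w) := fun h => hv (Or.inr ⟨hvM, h⟩)
        push_neg at hne
        obtain ⟨w, hwch, hadj⟩ := hne
        exact ⟨w, Or.inl hwch, hadj⟩
    have hSmax : IsMaxIndepSet G S := by
      refine ⟨hind, fun T hT hsubT => ?_⟩
      apply Set.Subset.antisymm hsubT
      intro v hvT
      by_contra hvS
      obtain ⟨w, hwS, hadj⟩ := hcover v hvS
      exact hT hvT (hsubT hwS) hadj
    refine ⟨⟨S, hSmax⟩, ?_⟩
    funext e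
    show psi S e.1 = f e
    have hfst : efst e.1 ∈ S ↔ f e = 1 := by
      rw [hSmatch _ ⟨e.1, e.2, efst_mem _⟩]
      exact hch_fst e
    have hsnd : esnd e.1 ∈ S ↔ f e = 2 := by
      rw [hSmatch _ ⟨e.1, e.2, esnd_mem _⟩]
      exact hch_snd e
    rcases fin3_cases (f e) with h | h | h <;> rw [h]
    · exact psi_zero.mpr ⟨fun hc => absurd (h.symm.trans (hfst.mp hc)) (by decide),
        fun hc => absurd (h.symm.trans (hsnd.mp hc)) (by decide)⟩
    · exact psi_one.mpr (hfst.mpr h)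
    · exact psi_two.mpr ⟨fun hc => absurd (h.symm.trans (hfst.mp hc)) (by decide),
        hsnd.mpr h⟩



/-- `m(G) = 3 ^ ν(G)` iff every connected component of `G` is a
triangle or a single isolated vertex (i.e. `G ≅ νK₃ ∪ tK₁`). -/
theorem numMaxIndep_eq_three_pow_matchingNumber_iff [Fintype V] (G : SimpleGraph V) :
    numMaxIndep G = 3 ^ matchingNumber G ↔
      ∀ c : G.ConnectedComponent,
        c.supp.ncard = 1 ∨
          (c.supp.ncard = 3 ∧ ∀ u ∈ c.supp, ∀ v ∈ c.supp, u ≠ v → G.Adj u v) := by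
  exact aux_numMaxIndep_eq_three_pow G
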